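/- Let m and n be coprime positive integers and let p be a prime dividing m. Define S₁ = {m^i : i ≥ 0}, and for each integer k ≥ 2 define S_k = {p·m^{ik} : i ≥ 0} ∪ {m^{ik+j} : i ≥ 0, 1 ≤ j ≤ k−1}. Then for all k ≠ l with k, l ≥ 1, the sets S_k[n] and S_l[n] are not division-equivalent: there exist no positive integers r, r' with (S_k[n])/r = (S_l[n])/r'. -/

import Mathlib

/-- For a set `S` of positive integers and a positive integer `r`,
`divSet S r = S/r = {s / gcd(r,s) : s ∈ S}`. -/
def divSet (S : Set ℕ) (r : ℕ) : Set ℕ := {x | ∃ s ∈ S, x = s / Nat.gcd r s}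

/-- For a set `S` of positive integers and `k` coprime to every element of `S`,
`brSet S k = S[k] = {s·k^i : s ∈ S, i ≥ 0}`. -/
def brSet (S : Set ℕ) (k : ℕ) : Set ℕ := {x | ∃ s ∈ S, ∃ i : ℕ, x = s * k ^ i}

/-- The family of sets `S_k`: `S_1 = {m^i : i ≥ 0}` and, for `k ≥ 2`,
`S_k = {p·m^{ik} : i ≥ 0} ∪ {m^{ik+j} : i ≥ 0, 1 ≤ j ≤ k−1}`. -/
def SFam (p m : ℕ) (k : ℕ) : Set ℕ :=
  if k = 1 then {x | ∃ i : ℕ, x = m ^ i}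
  else {x | ∃ i : ℕ, x = p * m ^ (i * k)} ∪
    {x | ∃ i j : ℕ, 1 ≤ j ∧ j ≤ k - 1 ∧ x = m ^ (i * k + j)}


lemma smooth_dvd {d M c t : ℕ} (hM : 1 ≤ M) (hd : d ∣ M ^ c) (hle : d ≤ 2 ^ t) :
    d ∣ M ^ t := by
  have hd0 : d ≠ 0 := by
    rintro rfl
    have h0 := Nat.eq_zero_of_zero_dvd hd
    have : 0 < M ^ c := by positivity
    omega
  have hMt : M ^ t ≠ 0 := by positivity
  rw [← Nat.factorization_le_iff_dvd hd0 hMt, Finsupp.le_def]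
  intro q
  by_cases hq : q.Prime
  · by_cases hqd : q ∣ d
    · have h1 : q ^ d.factorization q ∣ d := Nat.ordProj_dvd d q
      have h2 : q ^ d.factorization q ≤ d := Nat.le_of_dvd (Nat.pos_of_ne_zero hd0) h1
      have h3 : 2 ^ d.factorization q ≤ q ^ d.factorization q :=
        Nat.pow_le_pow_left hq.two_le _
      have h4 : d.factorization q ≤ t := by
        have h5 := h3.trans (h2.trans hle)
        exact (Nat.pow_le_pow_iff_right one_lt_two).mp h5
      have hqM : q ∣ M := hq.dvd_of_dvd_pow (hqd.trans hd)
      have h5 : 1 ≤ M.factorization q :=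
        hq.factorization_pos_of_dvd (by omega) hqM
      have h6 : (M ^ t).factorization q = t * M.factorization q := by
        rw [Nat.factorization_pow]; simp
      rw [h6]
      calc d.factorization q ≤ t := h4
        _ ≤ t * M.factorization q := Nat.le_mul_of_pos_right t h5
    · simp [Nat.factorization_eq_zero_of_not_dvd hqd]
  · simp [Nat.factorization_eq_zero_of_not_prime _ hq]

lemma gcd_stab {r m s c : ℕ} (hr : 0 < r) (hm : 2 ≤ m) (h1 : m ^ r ∣ s) (h2 : s ∣ m ^ c) :
    Nat.gcd r s = Nat.gcd r (m ^ r) := by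
  apply Nat.dvd_antisymm
  · exact Nat.dvd_gcd (Nat.gcd_dvd_left r s)
      (smooth_dvd (by omega) ((Nat.gcd_dvd_right r s).trans h2)
        ((Nat.le_of_dvd hr (Nat.gcd_dvd_left r s)).trans (Nat.lt_two_pow_self (n := r)).le))
  · exact Nat.dvd_gcd (Nat.gcd_dvd_left _ _) ((Nat.gcd_dvd_right _ _).trans h1)

lemma npm {p m : ℕ} (hm : 2 ≤ m) (hpm : p ∣ m) (hne : p ≠ m) (hp2 : 2 ≤ p) {X Y : ℕ}
    (h : p * m ^ X = m ^ Y) : False := by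
  have hmX : 0 < m ^ X := by positivity
  have hlt : X < Y := by
    have h1 : m ^ X < m ^ Y := by nlinarith
    exact (Nat.pow_lt_pow_iff_right (by omega)).mp h1
  have hd : Y = X + (Y - X) := by omega
  rw [hd, pow_add] at h
  have h' : m ^ X * p = m ^ X * m ^ (Y - X) := by rw [mul_comm (m ^ X) p]; exact h
  have hpe := Nat.eq_of_mul_eq_mul_left hmX h'
  have hmdvd : m ∣ p := by
    rw [hpe]; exact dvd_pow_self m (by omega)
  exact hne (Nat.dvd_antisymm hpm hmdvd)

lemma nppm {p m : ℕ} (hm : 2 ≤ m) (hpm : p ∣ m) (hne : p ≠ m) (hp2 : 2 ≤ p) {X Y : ℕ}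
    (h : p * (p * m ^ X) = m ^ Y) : m = p * p ∧ Y = X + 1 := by
  have hmX : 0 < m ^ X := by positivity
  have hlt : X < Y := by
    have h4 : 2 * (2 * m ^ X) ≤ p * (p * m ^ X) := Nat.mul_le_mul hp2 (Nat.mul_le_mul hp2 le_rfl)
    have h1 : m ^ X < m ^ Y := by omega
    exact (Nat.pow_lt_pow_iff_right (by omega)).mp h1
  have hd : Y = X + (Y - X) := by omega
  rw [hd, pow_add] at h
  have h' : m ^ X * (p * p) = m ^ X * m ^ (Y - X) := by rw [← h]; ring
  have hpe := Nat.eq_of_mul_eq_mul_left hmX h'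
  rcases Nat.lt_or_ge (Y - X) 2 with hd2 | hd2
  · have hd1 : Y - X = 1 := by omega
    rw [hd1, pow_one] at hpe
    exact ⟨hpe.symm, by omega⟩
  · exfalso
    have hdvd : m ^ 2 ∣ m ^ (Y - X) := pow_dvd_pow m hd2
    rw [← hpe] at hdvd
    have hdvd2 : m ^ 2 ∣ p ^ 2 := by rwa [pow_two p]
    have hmp : m ∣ p := (Nat.pow_dvd_pow_iff (by norm_num)).mp hdvd2
    exact hne (Nat.dvd_antisymm hpm hmp)

lemma SFam_cases {p m k s : ℕ} (hs : s ∈ SFam p m k) :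
    (k = 1 ∧ ∃ i, s = m ^ i) ∨
      (k ≠ 1 ∧ ((∃ i, s = p * m ^ (i * k)) ∨
        ∃ i j, 1 ≤ j ∧ j ≤ k - 1 ∧ s = m ^ (i * k + j))) := by
  by_cases h : k = 1 <;>
    simp only [SFam, h, if_true, if_false, Set.mem_union, Set.mem_setOf_eq] at hs <;> tauto

lemma SFam_mem_p {p m k : ℕ} (hk : k ≠ 1) (i : ℕ) : p * m ^ (i * k) ∈ SFam p m k := by
  simp only [SFam, if_neg hk]
  exact Or.inl ⟨i, rfl⟩

lemma SFam_mem_pow {p m k : ℕ} (hk : k ≠ 1) (i j : ℕ) (h1 : 1 ≤ j) (h2 : j ≤ k - 1) :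
    m ^ (i * k + j) ∈ SFam p m k := by
  simp only [SFam, if_neg hk]
  exact Or.inr ⟨i, j, h1, h2, rfl⟩

lemma SFam_mem_one {p m : ℕ} (i : ℕ) : m ^ i ∈ SFam p m 1 := by
  simp only [SFam, if_pos rfl]
  exact ⟨i, rfl⟩

lemma SFam_pos {p m k s : ℕ} (hm : 2 ≤ m) (hp : 0 < p) (hs : s ∈ SFam p m k) : 0 < s := by
  rcases SFam_cases hs with ⟨_, i, rfl⟩ | ⟨_, ⟨i, rfl⟩ | ⟨i, j, _, _, rfl⟩⟩ <;> positivity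

lemma SFam_smooth {p m k s : ℕ} (hpm : p ∣ m) (hs : s ∈ SFam p m k) : ∃ c, s ∣ m ^ c := by
  rcases SFam_cases hs with ⟨_, i, rfl⟩ | ⟨_, ⟨i, rfl⟩ | ⟨i, j, _, _, rfl⟩⟩
  · exact ⟨i, dvd_rfl⟩
  · exact ⟨i * k + 1, by rw [pow_succ, mul_comm (m ^ (i * k)) m]
                         exact Nat.mul_dvd_mul hpm dvd_rfl⟩
  · exact ⟨i * k + j, dvd_rfl⟩

lemma SFam_large {p m l s E : ℕ} (hm : 2 ≤ m) (hp : 0 < p) (hs : s ∈ SFam p m l)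
    (hbig : p * m ^ E < s) : m ^ E ∣ s := by
  have key : ∀ N : ℕ, p * m ^ E < m ^ N → m ^ E ∣ m ^ N := by
    intro N hN
    have h1 : m ^ E < m ^ N := lt_of_le_of_lt (Nat.le_mul_of_pos_left _ hp) hN
    exact pow_dvd_pow m ((Nat.pow_lt_pow_iff_right (by omega)).mp h1).le
  rcases SFam_cases hs with ⟨_, N, rfl⟩ | ⟨_, ⟨i, rfl⟩ | ⟨i, j, _, _, rfl⟩⟩
  · exact key _ hbig
  · have h1 : m ^ E < m ^ (i * l) := by
      have h2 : 0 < p := hp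
      nlinarith
    exact (pow_dvd_pow m ((Nat.pow_lt_pow_iff_right (by omega)).mp h1).le).trans
      (Dvd.intro_left p rfl)
  · exact key _ hbig

lemma transfer {m p r r' k l : ℕ} (hm : 2 ≤ m) (hp2 : 2 ≤ p) (hpm : p ∣ m)
    (hr : 0 < r) (hr' : 0 < r')
    (hsub : divSet (SFam p m k) r ⊆ divSet (SFam p m l) r')
    {s : ℕ} (hs : s ∈ SFam p m k) (hdvd : m ^ (r + r' + 2) ∣ s) :
    ∃ s' ∈ SFam p m l, s * Nat.gcd r' (m ^ r') = s' * Nat.gcd r (m ^ r) := by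
  obtain ⟨c, hc⟩ := SFam_smooth hpm hs
  have hspos : 0 < s := SFam_pos hm (by omega) hs
  have hmr : m ^ r ∣ s := (pow_dvd_pow m (by omega)).trans hdvd
  have hgcd : Nat.gcd r s = Nat.gcd r (m ^ r) := gcd_stab hr hm hmr hc
  have hgs : Nat.gcd r (m ^ r) ∣ s := hgcd ▸ Nat.gcd_dvd_right r s
  set g := Nat.gcd r (m ^ r) with hg
  set g' := Nat.gcd r' (m ^ r') with hg'
  have hgpos : 0 < g := Nat.gcd_pos_of_pos_left _ hr
  have hxg : s / g * g = s := Nat.div_mul_cancel hgs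
  have hxmem : s / g ∈ divSet (SFam p m k) r := ⟨s, hs, by rw [hgcd]⟩
  obtain ⟨s', hs', hxeq⟩ := hsub hxmem
  have hgs'd : Nat.gcd r' s' ∣ s' := Nat.gcd_dvd_right _ _
  have hx2 : s / g * Nat.gcd r' s' = s' := by rw [hxeq]; exact Nat.div_mul_cancel hgs'd
  have hgle : g ≤ m ^ r := Nat.le_of_dvd (by positivity) (Nat.gcd_dvd_right _ _)
  have hxbig : p * m ^ r' < s / g := by
    by_contra hcon
    push_neg at hcon
    have h1 : s ≤ p * m ^ r' * m ^ r := by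
      calc s = s / g * g := hxg.symm
        _ ≤ p * m ^ r' * m ^ r := Nat.mul_le_mul hcon hgle
    have h2 : m ^ (r + r' + 2) ≤ s := Nat.le_of_dvd hspos hdvd
    have hple : p ≤ m := Nat.le_of_dvd (by omega) hpm
    have h3 : p * m ^ r' * m ^ r ≤ m * m ^ r' * m ^ r :=
      Nat.mul_le_mul (Nat.mul_le_mul hple le_rfl) le_rfl
    have h4 : m * m ^ r' * m ^ r = m ^ (r + r' + 1) := by
      rw [pow_add, pow_add, pow_one]; ring
    have h5 : m ^ (r + r' + 1) < m ^ (r + r' + 2) :=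
      (Nat.pow_lt_pow_iff_right (by omega)).mpr (by omega)
    omega
  have hgcds'pos : 0 < Nat.gcd r' s' := Nat.gcd_pos_of_pos_left _ hr'
  have hs'big : p * m ^ r' < s' := by
    calc p * m ^ r' < s / g := hxbig
      _ ≤ s / g * Nat.gcd r' s' := Nat.le_mul_of_pos_right _ hgcds'pos
      _ = s' := hx2
  obtain ⟨c', hc'⟩ := SFam_smooth hpm hs'
  have hEdvd : m ^ r' ∣ s' := SFam_large hm (by omega) hs' hs'big
  have hgcd' : Nat.gcd r' s' = g' := gcd_stab hr' hm hEdvd hc'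
  refine ⟨s', hs', ?_⟩
  calc s * g' = s / g * g * g' := by rw [hxg]
    _ = s / g * g' * g := by ring
    _ = s' * g := by rw [← hgcd', hx2]

lemma coreB_dvd {m p r r' k l : ℕ} (hm : 2 ≤ m) (hp2 : 2 ≤ p) (hpm : p ∣ m) (hne : p ≠ m)
    (hr : 0 < r) (hr' : 0 < r') (hk : 2 ≤ k) (hl : 2 ≤ l)
    (hsub : divSet (SFam p m k) r ⊆ divSet (SFam p m l) r') : l ∣ k := by
  set I := r + r' + 2 with hI
  set g := Nat.gcd r (m ^ r) with hg
  set g' := Nat.gcd r' (m ^ r') with hg'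
  have hk1 : k ≠ 1 := by omega
  have hl1 : l ≠ 1 := by omega
  have hgpos : 0 < g := Nat.gcd_pos_of_pos_left _ hr
  have hg'pos : 0 < g' := Nat.gcd_pos_of_pos_left _ hr'
  have hd1 : m ^ I ∣ p * m ^ (I * k) :=
    (pow_dvd_pow m (Nat.le_mul_of_pos_right I (by omega))).trans (dvd_mul_left _ p)
  have hd2 : m ^ I ∣ p * m ^ ((I + 1) * k) :=
    (pow_dvd_pow m (by nlinarith)).trans (dvd_mul_left _ p)
  obtain ⟨t₁, ht₁, e₁⟩ := transfer hm hp2 hpm hr hr' hsub (SFam_mem_p hk1 I) hd1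
  obtain ⟨t₂, ht₂, e₂⟩ := transfer hm hp2 hpm hr hr' hsub (SFam_mem_p hk1 (I + 1)) hd2
  have e₃ : t₂ = m ^ k * t₁ := by
    apply (Nat.eq_of_mul_eq_mul_right hgpos ?_)
    calc t₂ * g = p * m ^ ((I + 1) * k) * g' := e₂.symm
      _ = m ^ k * (p * m ^ (I * k) * g') := by
          rw [show (I + 1) * k = I * k + k by ring, pow_add]; ring
      _ = m ^ k * (t₁ * g) := by rw [e₁]
      _ = m ^ k * t₁ * g := by ring
  rcases SFam_cases ht₁ with ⟨hl1', _⟩ | ⟨_, ⟨i, ht1e⟩ | ⟨i, j, hj1, hj2, ht1e⟩⟩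
  · exact absurd hl1' hl1
  · -- t₁ = p * m ^ (i * l)
    rcases SFam_cases ht₂ with ⟨hl1', _⟩ | ⟨_, ⟨i₂, ht2e⟩ | ⟨i₂, j₂, _, _, ht2e⟩⟩
    · exact absurd hl1' hl1
    · have he : p * m ^ (i₂ * l) = p * m ^ (i * l + k) := by
        rw [← ht2e, e₃, ht1e, pow_add]; ring
      have hexp : i₂ * l = i * l + k :=
        Nat.pow_right_injective hm (Nat.eq_of_mul_eq_mul_left (by omega) he)
      exact (Nat.dvd_add_right ⟨i, mul_comm i l⟩).mp ⟨i₂, by rw [mul_comm l i₂]; omega⟩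
    · exfalso
      apply npm hm hpm hne hp2 (X := i * l + k) (Y := i₂ * l + j₂)
      rw [← ht2e, e₃, ht1e, pow_add]; ring
  · -- t₁ = m ^ (i * l + j)
    exfalso
    rw [ht1e] at e₁
    obtain ⟨u, hu, e₄⟩ := transfer hm hp2 hpm hr hr' hsub
      (SFam_mem_pow hk1 I 1 le_rfl (by omega))
      (pow_dvd_pow m (by nlinarith))
    have key : m ^ (i * l + j + 1) = p * u := by
      have hpos : 0 < m ^ (I * k) * (g * g') := Nat.mul_pos (Nat.pow_pos (by omega)) (Nat.mul_pos hgpos hg'pos)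
      apply Nat.eq_of_mul_eq_mul_right hpos
      calc m ^ (i * l + j + 1) * (m ^ (I * k) * (g * g'))
          = (m ^ (I * k + 1) * g') * (m ^ (i * l + j) * g) := by
            rw [pow_add, pow_add, pow_add, pow_one]; ring
        _ = (u * g) * (m ^ (i * l + j) * g) := by rw [e₄]
        _ = (u * g) * (p * m ^ (I * k) * g') := by rw [← e₁]
        _ = p * u * (m ^ (I * k) * (g * g')) := by ring
    rcases SFam_cases hu with ⟨hl1', _⟩ | ⟨_, ⟨i₂, hue⟩ | ⟨i₂, j₂, _, _, hue⟩⟩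
    · exact absurd hl1' hl1
    · rw [hue] at key
      obtain ⟨_, hexp⟩ := nppm hm hpm hne hp2 key.symm
      have hldj : l ∣ j := (Nat.dvd_add_right ⟨i, mul_comm i l⟩).mp ⟨i₂, by rw [mul_comm l i₂]; omega⟩
      have := Nat.le_of_dvd (by omega) hldj
      omega
    · rw [hue] at key
      exact npm hm hpm hne hp2 key.symm

lemma coreB1 {m p r r' k : ℕ} (hm : 2 ≤ m) (hp2 : 2 ≤ p) (hpm : p ∣ m) (hne : p ≠ m)
    (hr : 0 < r) (hr' : 0 < r') (hk : 2 ≤ k)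
    (hsub : divSet (SFam p m k) r ⊆ divSet (SFam p m 1) r') : False := by
  set I := r + r' + 2 with hI
  set g := Nat.gcd r (m ^ r) with hg
  set g' := Nat.gcd r' (m ^ r') with hg'
  have hk1 : k ≠ 1 := by omega
  have hgpos : 0 < g := Nat.gcd_pos_of_pos_left _ hr
  have hg'pos : 0 < g' := Nat.gcd_pos_of_pos_left _ hr'
  have hd1 : m ^ I ∣ p * m ^ (I * k) :=
    (pow_dvd_pow m (Nat.le_mul_of_pos_right I (by omega))).trans (dvd_mul_left _ p)
  obtain ⟨t₁, ht₁, e₁⟩ := transfer hm hp2 hpm hr hr' hsub (SFam_mem_p hk1 I) hd1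
  obtain ⟨u, hu, e₄⟩ := transfer hm hp2 hpm hr hr' hsub
    (SFam_mem_pow hk1 I 1 le_rfl (by omega))
    (pow_dvd_pow m (by nlinarith))
  rcases SFam_cases ht₁ with ⟨_, b, ht1e⟩ | ⟨h1, _⟩
  swap
  · exact h1 rfl
  rcases SFam_cases hu with ⟨_, b₂, hue⟩ | ⟨h1, _⟩
  swap
  · exact h1 rfl
  rw [ht1e] at e₁
  rw [hue] at e₄
  have key : m ^ (b + 1) = p * m ^ b₂ := by
    have hpos : 0 < m ^ (I * k) * (g * g') := Nat.mul_pos (Nat.pow_pos (by omega)) (Nat.mul_pos hgpos hg'pos)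
    apply Nat.eq_of_mul_eq_mul_right hpos
    calc m ^ (b + 1) * (m ^ (I * k) * (g * g'))
        = (m ^ (I * k + 1) * g') * (m ^ b * g) := by
          rw [pow_add, pow_add, pow_one]; ring
      _ = (m ^ b₂ * g) * (m ^ b * g) := by rw [e₄]
      _ = (m ^ b₂ * g) * (p * m ^ (I * k) * g') := by rw [← e₁]
      _ = p * m ^ b₂ * (m ^ (I * k) * (g * g')) := by ring
  exact npm hm hpm hne hp2 key.symm

lemma memA {m k s : ℕ} (hm : 2 ≤ m) (hk : 2 ≤ k) :
    s ∈ SFam m m k ↔ ∃ N, ¬ k ∣ N ∧ s = m ^ N := by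
  constructor
  · intro hs
    rcases SFam_cases hs with ⟨h1, _⟩ | ⟨_, ⟨i, rfl⟩ | ⟨i, j, hj1, hj2, rfl⟩⟩
    · omega
    · refine ⟨i * k + 1, ?_, by rw [pow_succ]; ring⟩
      intro hdvd
      have := (Nat.dvd_add_right ⟨i, mul_comm i k⟩).mp hdvd
      have := Nat.le_of_dvd one_pos this
      omega
    · refine ⟨i * k + j, ?_, rfl⟩
      intro hdvd
      have := (Nat.dvd_add_right ⟨i, mul_comm i k⟩).mp hdvd
      have := Nat.le_of_dvd (by omega) this
      omega
  · rintro ⟨N, hN, rfl⟩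
    have hk0 : 0 < k := by omega
    have hmod : N % k ≠ 0 := by
      intro h0
      exact hN (Nat.dvd_iff_mod_eq_zero.mpr h0)
    have hlt : N % k < k := Nat.mod_lt N hk0
    have hrep : N / k * k + N % k = N := by
      rw [mul_comm]; exact Nat.div_add_mod N k
    have := SFam_mem_pow (p := m) (m := m) (k := k) (by omega) (N / k) (N % k) (by omega) (by omega)
    rwa [hrep] at this

lemma coreA_dvd {m r r' k l : ℕ} (hmp : m.Prime) (hr : 0 < r) (hr' : 0 < r')
    (hk : 2 ≤ k) (hl : 2 ≤ l)
    (hsub : divSet (SFam m m k) r ⊆ divSet (SFam m m l) r')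
    (hsub' : divSet (SFam m m l) r' ⊆ divSet (SFam m m k) r) : l ∣ k := by
  have hm : 2 ≤ m := hmp.two_le
  obtain ⟨v, hvle, hgv⟩ := (Nat.dvd_prime_pow hmp).mp (Nat.gcd_dvd_right r (m ^ r))
  obtain ⟨v', hvle', hgv'⟩ := (Nat.dvd_prime_pow hmp).mp (Nat.gcd_dvd_right r' (m ^ r'))
  set I := r + r' + 2 with hI
  have H' : ∀ N', I ≤ N' → ¬ l ∣ N' → ∃ N, ¬ k ∣ N ∧ N' + v = N + v' := by
    intro N' hNI hNl
    obtain ⟨s, hs, e⟩ := transfer hm hm dvd_rfl hr' hr hsub'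
      ((memA hm hl).mpr ⟨N', hNl, rfl⟩) (pow_dvd_pow m (by omega))
    obtain ⟨N, hN, rfl⟩ := (memA hm hk).mp hs
    rw [hgv, hgv', ← pow_add, ← pow_add] at e
    exact ⟨N, hN, Nat.pow_right_injective hm e⟩
  have F : ∀ M, I + v + v' + 2 ≤ M → k ∣ M → l ∣ M + v' - v := by
    intro M hM hkM
    by_contra hc
    obtain ⟨N, hN, he⟩ := H' (M + v' - v) (by omega) hc
    have : N = M := by omega
    exact hN (this ▸ hkM)
  have h1 := F (k * (I + v + v' + 2)) (Nat.le_mul_of_pos_left _ (by omega)) ⟨_, rfl⟩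
  have hb := Nat.le_mul_of_pos_left (I + v + v' + 2) (show 0 < k by omega)
  have h2 := F (k * (I + v + v' + 2) + k) (by omega) ⟨I + v + v' + 3, by ring⟩
  have hsub2 : k * (I + v + v' + 2) + k + v' - v = (k * (I + v + v' + 2) + v' - v) + k := by
    omega
  rw [hsub2] at h2
  have h3 := Nat.dvd_sub h2 h1
  have h4 : k * (I + v + v' + 2) + v' - v + k - (k * (I + v + v' + 2) + v' - v) = k := by omega
  rwa [h4] at h3

lemma coreA1 {m r r' l : ℕ} (hmp : m.Prime) (hr : 0 < r) (hr' : 0 < r') (hl : 2 ≤ l)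
    (hsub : divSet (SFam m m 1) r ⊆ divSet (SFam m m l) r') : False := by
  have hm : 2 ≤ m := hmp.two_le
  obtain ⟨v, hvle, hgv⟩ := (Nat.dvd_prime_pow hmp).mp (Nat.gcd_dvd_right r (m ^ r))
  obtain ⟨v', hvle', hgv'⟩ := (Nat.dvd_prime_pow hmp).mp (Nat.gcd_dvd_right r' (m ^ r'))
  set I := r + r' + 2 with hI
  have H : ∀ N, I ≤ N → ∃ N', ¬ l ∣ N' ∧ N + v' = N' + v := by
    intro N hNI
    obtain ⟨s, hs, e⟩ := transfer hm hm dvd_rfl hr hr' hsub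
      (SFam_mem_one N) (pow_dvd_pow m (by omega))
    obtain ⟨N', hN', rfl⟩ := (memA hm hl).mp hs
    rw [hgv, hgv', ← pow_add, ← pow_add] at e
    exact ⟨N', hN', Nat.pow_right_injective hm e⟩
  set L := l * (I + v + v' + 2) with hL
  have hb := Nat.le_mul_of_pos_left (I + v + v' + 2) (show 0 < l by omega)
  have hLv : v' ≤ L := by omega
  obtain ⟨N', hN', he⟩ := H (L + v - v') (by omega)
  have : N' = L := by omega
  exact hN' (this ▸ ⟨_, rfl⟩)

lemma reduce_sub {m n : ℕ} (hmn : Nat.Coprime m n)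
    {S S' : Set ℕ} (hS' : ∀ s ∈ S', ∃ c, s ∣ m ^ c)
    (hSm : ∀ s ∈ S, ∃ c, s ∣ m ^ c)
    {r r' : ℕ}
    (h : divSet (brSet S n) r ⊆ divSet (brSet S' n) r') :
    divSet S r ⊆ divSet S' r' := by
  rintro x ⟨a, ha, rfl⟩
  have hx : a / Nat.gcd r a ∈ divSet (brSet S n) r :=
    ⟨a, ⟨a, ha, 0, by simp⟩, rfl⟩
  obtain ⟨s', ⟨a', ha', e, rfl⟩, hxe⟩ := h hx
  obtain ⟨c', hc'⟩ := hS' a' ha'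
  have ha'n : Nat.Coprime a' (n ^ e) :=
    Nat.Coprime.coprime_dvd_left hc' (Nat.Coprime.pow _ _ hmn)
  have hgmul : Nat.gcd r' (a' * n ^ e) = Nat.gcd r' a' * Nat.gcd r' (n ^ e) :=
    Nat.Coprime.gcd_mul r' ha'n
  have hsplit : a' * n ^ e / (Nat.gcd r' a' * Nat.gcd r' (n ^ e))
      = a' / Nat.gcd r' a' * (n ^ e / Nat.gcd r' (n ^ e)) :=
    (Nat.div_mul_div_comm (Nat.gcd_dvd_right r' a') (Nat.gcd_dvd_right r' (n ^ e))).symm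
  have hxXY : a / Nat.gcd r a = a' / Nat.gcd r' a' * (n ^ e / Nat.gcd r' (n ^ e)) := by
    rw [hxe, hgmul, hsplit]
  have hYdvd : n ^ e / Nat.gcd r' (n ^ e) ∣ n ^ e :=
    Nat.div_dvd_of_dvd (Nat.gcd_dvd_right r' (n ^ e))
  have hxa : a / Nat.gcd r a ∣ a := Nat.div_dvd_of_dvd (Nat.gcd_dvd_right r a)
  obtain ⟨c, hc⟩ := hSm a ha
  have hcop : Nat.Coprime (a / Nat.gcd r a) (n ^ e) :=
    Nat.Coprime.coprime_dvd_left (hxa.trans hc) (Nat.Coprime.pow _ _ hmn)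
  have hYx : n ^ e / Nat.gcd r' (n ^ e) ∣ a / Nat.gcd r a :=
    ⟨a' / Nat.gcd r' a', by rw [hxXY]; ring⟩
  have hY1 : n ^ e / Nat.gcd r' (n ^ e) = 1 :=
    Nat.dvd_one.mp (hcop ▸ Nat.dvd_gcd hYx hYdvd)
  exact ⟨a', ha', by rw [hxXY, hY1, mul_one]⟩

theorem stmt6 (m n : ℕ) (hm : 0 < m) (hn : 0 < n) (hmn : Nat.Coprime m n)
    (p : ℕ) (hp : p.Prime) (hpm : p ∣ m)
    (k l : ℕ) (hk : 1 ≤ k) (hl : 1 ≤ l) (hkl : k ≠ l) :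
    ¬ ∃ r r' : ℕ, 0 < r ∧ 0 < r' ∧
      divSet (brSet (SFam p m k) n) r = divSet (brSet (SFam p m l) n) r' := by
  rintro ⟨r, r', hr, hr', heqB⟩
  have hp2 : 2 ≤ p := hp.two_le
  have hm2 : 2 ≤ m := le_trans hp2 (Nat.le_of_dvd hm hpm)
  have hSk : ∀ s ∈ SFam p m k, ∃ c, s ∣ m ^ c := fun s hs => SFam_smooth hpm hs
  have hSl : ∀ s ∈ SFam p m l, ∃ c, s ∣ m ^ c := fun s hs => SFam_smooth hpm hs
  have h1 : divSet (SFam p m k) r ⊆ divSet (SFam p m l) r' :=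
    reduce_sub hmn hSl hSk heqB.subset
  have h2 : divSet (SFam p m l) r' ⊆ divSet (SFam p m k) r :=
    reduce_sub hmn hSk hSl heqB.symm.subset
  by_cases hmp : p = m
  · subst hmp
    rcases Nat.lt_or_ge k 2 with hk2 | hk2
    · have hk1 : k = 1 := by omega
      have hl2 : 2 ≤ l := by omega
      subst hk1
      exact coreA1 hp hr hr' hl2 h1
    · rcases Nat.lt_or_ge l 2 with hl2 | hl2
      · have hl1 : l = 1 := by omega
        subst hl1
        exact coreA1 hp hr' hr hk2 h2
      · have d1 : l ∣ k := coreA_dvd hp hr hr' hk2 hl2 h1 h2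
        have d2 : k ∣ l := coreA_dvd hp hr' hr hl2 hk2 h2 h1
        exact hkl (Nat.dvd_antisymm d2 d1)
  · rcases Nat.lt_or_ge k 2 with hk2 | hk2
    · have hk1 : k = 1 := by omega
      have hl2 : 2 ≤ l := by omega
      subst hk1
      exact coreB1 hm2 hp2 hpm hmp hr' hr hl2 h2
    · rcases Nat.lt_or_ge l 2 with hl2 | hl2
      · have hl1 : l = 1 := by omega
        subst hl1
        exact coreB1 hm2 hp2 hpm hmp hr hr' hk2 h1
      · have d1 : l ∣ k := coreB_dvd hm2 hp2 hpm hmp hr hr' hk2 hl2 h1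
        have d2 : k ∣ l := coreB_dvd hm2 hp2 hpm hmp hr' hr hl2 hk2 h2
        exact hkl (Nat.dvd_antisymm d2 d1)
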